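/- In the 4-player egalitarian construction, in every envy-free complete connected division the rightmost piece must be given to player 1. -/

import Mathlib

open MeasureTheory Set
open scoped ENNReal

/-- A connected division of the cake `[0,1]` among `n` players: each player gets an
open interval, the intervals are pairwise disjoint and contained in `[0,1]`. -/
structure ConnDiv (n : ℕ) where
  pieces : Fin n → Set ℝ
  isInterval : ∀ i, ∃ a b : ℝ, pieces i = Set.Ioo a b
  subset : ∀ i, pieces i ⊆ Set.Icc (0:ℝ) 1
  disj : Pairwise fun i j => Disjoint (pieces i) (pieces j)

/-- A connected division is complete if the closures of the pieces cover `[0,1]`. -/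
def ConnDiv.Complete {n : ℕ} (d : ConnDiv n) : Prop :=
  Set.Icc (0:ℝ) 1 ⊆ ⋃ i, closure (d.pieces i)

/-- Envy-freeness: every player weakly prefers her own piece. -/
def EnvyFree {n : ℕ} (v : Fin n → Measure ℝ) (d : ConnDiv n) : Prop :=
  ∀ i j, v i (d.pieces j) ≤ v i (d.pieces i)

/-- Utilitarian welfare: sum of own-piece values. -/
noncomputable def util {n : ℕ} (v : Fin n → Measure ℝ) (d : ConnDiv n) : ℝ≥0∞ :=
  ∑ i, v i (d.pieces i)

/-- Egalitarian welfare: minimum own-piece value. -/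
noncomputable def egal {n : ℕ} (v : Fin n → Measure ℝ) (d : ConnDiv n) : ℝ≥0∞ :=
  ⨅ i, v i (d.pieces i)

/-- The uniform measure of total mass `m` on the interval `(a,b)`. -/
noncomputable def unifOn (a b m : ℝ) : Measure ℝ :=
  ENNReal.ofReal (m / (b - a)) • volume.restrict (Set.Ioo a b)

/-- Player 1's measure: `1/2 - ε` on `(0,ε)`, `3ε` on `(3/4, 3/4+3ε)`,
`1/2 - 2ε` on `(1-ε,1)`, uniform within each interval. -/
noncomputable def q1 (ε : ℝ) : Measure ℝ :=
  unifOn 0 ε (1/2 - ε) + unifOn (3/4) (3/4 + 3*ε) (3*ε) + unifOn (1-ε) 1 (1/2 - 2*ε)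

/-- Player 2's measure: `3ε` on `(ε,2ε)`, `1/2 - 2ε` on `(1/4-ε, 1/4)`,
`1/2 - ε` on `(1/2, 1/2+ε)`, uniform within each interval. -/
noncomputable def q2 (ε : ℝ) : Measure ℝ :=
  unifOn ε (2*ε) (3*ε) + unifOn (1/4 - ε) (1/4) (1/2 - 2*ε) +
    unifOn (1/2) (1/2 + ε) (1/2 - ε)

/-- The uniform (Lebesgue) measure on `[0,1]` (players 3 and 4). -/
noncomputable def qU : Measure ℝ := volume.restrict (Set.Icc (0:ℝ) 1)

noncomputable def vEg4' (ε : ℝ) : Fin 4 → Measure ℝ := ![q1 ε, q2 ε, qU, qU]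


/-! ### Auxiliary lemmas -/

lemma unifOn_apply (a b m : ℝ) (s : Set ℝ) :
    unifOn a b m s = ENNReal.ofReal (m / (b - a)) * volume (s ∩ Set.Ioo a b) := by
  simp [unifOn, Measure.smul_apply, Measure.restrict_apply' measurableSet_Ioo, smul_eq_mul]

lemma unifOn_full {a b m : ℝ} (hab : a < b) (hm : 0 ≤ m) {s : Set ℝ}
    (hs : Set.Ioo a b ⊆ s) : unifOn a b m s = ENNReal.ofReal m := by
  rw [unifOn_apply, Set.inter_eq_right.2 hs, Real.volume_Ioo,
    ← ENNReal.ofReal_mul (div_nonneg hm (by linarith)),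
    div_mul_cancel₀ _ (by linarith : b - a ≠ 0)]

lemma unifOn_le {a b m : ℝ} (hab : a < b) (hm : 0 ≤ m) (s : Set ℝ) :
    unifOn a b m s ≤ ENNReal.ofReal m := by
  rw [← unifOn_full hab hm (Set.subset_univ _)]
  exact measure_mono (Set.subset_univ s)

lemma unifOn_null {a b m : ℝ} {s : Set ℝ} (hs : volume s = 0) : unifOn a b m s = 0 := by
  rw [unifOn_apply]
  have : volume (s ∩ Set.Ioo a b) = 0 :=
    le_antisymm (hs ▸ measure_mono Set.inter_subset_left) zero_le
  simp [this]

lemma unifOn_empty' {a b m c : ℝ} (h : b ≤ c ∨ 1 ≤ a) :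
    unifOn a b m (Set.Ioo c 1) = 0 := by
  rw [unifOn_apply, Set.Ioo_inter_Ioo]
  rcases h with h | h
  · rw [Set.Ioo_eq_empty (by simp only [not_lt]; exact le_trans (min_le_right _ _) (le_trans h (le_max_left _ _)))]
    simp
  · rw [Set.Ioo_eq_empty (by simp only [not_lt]; exact le_trans (min_le_left _ _) (le_trans h (le_max_right _ _)))]
    simp

lemma connDiv_measurable {n : ℕ} (d : ConnDiv n) (i : Fin n) :
    MeasurableSet (d.pieces i) := by
  obtain ⟨a, b, h⟩ := d.isInterval i
  rw [h]; exact measurableSet_Ioo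

lemma q1_null {ε : ℝ} {s : Set ℝ} (hs : volume s = 0) : q1 ε s = 0 := by
  simp [q1, unifOn_null hs]

lemma q2_null {ε : ℝ} {s : Set ℝ} (hs : volume s = 0) : q2 ε s = 0 := by
  simp [q2, unifOn_null hs]

lemma qU_null {s : Set ℝ} (hs : volume s = 0) : qU s = 0 := by
  rw [qU, Measure.restrict_apply' measurableSet_Icc]
  exact le_antisymm (hs ▸ measure_mono Set.inter_subset_left) zero_le

lemma q1_univ_le {ε : ℝ} (hε : 0 < ε) (hε' : ε < 1/100) : q1 ε Set.univ ≤ 1 := by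
  have h1 := unifOn_le (a := 0) (b := ε) (m := 1/2 - ε) hε (by linarith) Set.univ
  have h2 := unifOn_le (a := 3/4) (b := 3/4 + 3*ε) (m := 3*ε) (by linarith) (by linarith) Set.univ
  have h3 := unifOn_le (a := 1 - ε) (b := 1) (m := 1/2 - 2*ε) (by linarith) (by linarith) Set.univ
  calc q1 ε Set.univ
      ≤ ENNReal.ofReal (1/2 - ε) + ENNReal.ofReal (3*ε) + ENNReal.ofReal (1/2 - 2*ε) := by
        simp only [q1, Measure.coe_add, Pi.add_apply]; gcongr
    _ = ENNReal.ofReal 1 := by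
        rw [← ENNReal.ofReal_add (by linarith) (by linarith),
          ← ENNReal.ofReal_add (by linarith) (by linarith)]
        ring_nf
    _ = 1 := ENNReal.ofReal_one

lemma q1_right {ε a : ℝ} (hε : 0 < ε) (hε' : ε < 1/100) (ha : a ≤ 3/4) :
    ENNReal.ofReal (1/2 + ε) ≤ q1 ε (Set.Ioo a 1) := by
  have h2 : unifOn (3/4) (3/4 + 3*ε) (3*ε) (Set.Ioo a 1) = ENNReal.ofReal (3*ε) :=
    unifOn_full (by linarith) (by linarith) (Set.Ioo_subset_Ioo ha (by linarith))
  have h3 : unifOn (1 - ε) 1 (1/2 - 2*ε) (Set.Ioo a 1) = ENNReal.ofReal (1/2 - 2*ε) :=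
    unifOn_full (by linarith) (by linarith) (Set.Ioo_subset_Ioo (by linarith) le_rfl)
  calc ENNReal.ofReal (1/2 + ε)
      = ENNReal.ofReal (3*ε) + ENNReal.ofReal (1/2 - 2*ε) := by
        rw [← ENNReal.ofReal_add (by linarith) (by linarith)]; congr 1; ring
    _ ≤ unifOn 0 ε (1/2 - ε) (Set.Ioo a 1) + ENNReal.ofReal (3*ε) + ENNReal.ofReal (1/2 - 2*ε) := by
        exact add_le_add le_add_self le_rfl
    _ = q1 ε (Set.Ioo a 1) := by
        simp only [q1, Measure.coe_add, Pi.add_apply, h2, h3]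

lemma q2_total {ε : ℝ} (hε : 0 < ε) (hε' : ε < 1/100) :
    ENNReal.ofReal 1 ≤ q2 ε (Set.Icc 0 1) := by
  have h1 : unifOn ε (2*ε) (3*ε) (Set.Icc 0 1) = ENNReal.ofReal (3*ε) :=
    unifOn_full (by linarith) (by linarith)
      (Set.Ioo_subset_Icc_self.trans (Set.Icc_subset_Icc (by linarith) (by linarith)))
  have h2 : unifOn (1/4 - ε) (1/4) (1/2 - 2*ε) (Set.Icc 0 1) = ENNReal.ofReal (1/2 - 2*ε) :=
    unifOn_full (by linarith) (by linarith)
      (Set.Ioo_subset_Icc_self.trans (Set.Icc_subset_Icc (by linarith) (by linarith)))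
  have h3 : unifOn (1/2) (1/2 + ε) (1/2 - ε) (Set.Icc 0 1) = ENNReal.ofReal (1/2 - ε) :=
    unifOn_full (by linarith) (by linarith)
      (Set.Ioo_subset_Icc_self.trans (Set.Icc_subset_Icc (by linarith) (by linarith)))
  have : q2 ε (Set.Icc 0 1)
      = ENNReal.ofReal (3*ε) + ENNReal.ofReal (1/2 - 2*ε) + ENNReal.ofReal (1/2 - ε) := by
    simp only [q2, Measure.coe_add, Pi.add_apply, h1, h2, h3]
  rw [this, ← ENNReal.ofReal_add (by linarith) (by linarith),
    ← ENNReal.ofReal_add (by linarith) (by linarith)]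
  exact ENNReal.ofReal_le_ofReal (by linarith)

lemma q2_right_zero {ε a : ℝ} (hε : 0 < ε) (hε' : ε < 1/100) (ha : 3/4 ≤ a) :
    q2 ε (Set.Ioo a 1) = 0 := by
  have h1 : unifOn ε (2*ε) (3*ε) (Set.Ioo a 1) = 0 := unifOn_empty' (Or.inl (by linarith))
  have h2 : unifOn (1/4 - ε) (1/4) (1/2 - 2*ε) (Set.Ioo a 1) = 0 :=
    unifOn_empty' (Or.inl (by linarith))
  have h3 : unifOn (1/2) (1/2 + ε) (1/2 - ε) (Set.Ioo a 1) = 0 :=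
    unifOn_empty' (Or.inl (by linarith))
  simp only [q2, Measure.coe_add, Pi.add_apply, h1, h2, h3, add_zero]

lemma qU_Icc : qU (Set.Icc 0 1) = ENNReal.ofReal 1 := by
  rw [qU, Measure.restrict_apply' measurableSet_Icc, Set.inter_self, Real.volume_Icc]
  norm_num

lemma qU_Ioo {a : ℝ} (h0 : 0 ≤ a) : qU (Set.Ioo a 1) = ENNReal.ofReal (1 - a) := by
  rw [qU, Measure.restrict_apply' measurableSet_Icc,
    Set.inter_eq_left.2 (Set.Ioo_subset_Icc_self.trans (Set.Icc_subset_Icc h0 le_rfl)),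
    Real.volume_Ioo]

lemma complement_null (d : ConnDiv 4) (hc : d.Complete) :
    volume (Set.Icc (0:ℝ) 1 \ ⋃ i, d.pieces i) = 0 := by
  have hsub : Set.Icc (0:ℝ) 1 \ (⋃ i, d.pieces i)
      ⊆ ⋃ i, (closure (d.pieces i) \ d.pieces i) := by
    intro x hx
    obtain ⟨i, hi⟩ := Set.mem_iUnion.1 (hc hx.1)
    exact Set.mem_iUnion.2 ⟨i, hi, fun h => hx.2 (Set.mem_iUnion.2 ⟨i, h⟩)⟩
  refine measure_mono_null hsub (measure_iUnion_null fun i => ?_)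
  obtain ⟨a, b, h⟩ := d.isInterval i
  rw [h]
  by_cases hab : a < b
  · refine measure_mono_null ?_ (((Set.finite_singleton b).insert a).measure_zero volume)
    intro x hx
    rw [closure_Ioo hab.ne] at hx
    simp only [Set.mem_diff, Set.mem_Icc, Set.mem_Ioo, not_and, not_lt] at hx
    rcases hx with ⟨⟨hxa, hxb⟩, hn⟩
    rcases lt_or_eq_of_le hxa with h' | h'
    · exact Set.mem_insert_iff.2 (Or.inr (le_antisymm hxb (hn h')))
    · exact Set.mem_insert_iff.2 (Or.inl h'.symm)
  · rw [Set.Ioo_eq_empty hab, closure_empty]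
    simp

lemma sum_pieces_ge (d : ConnDiv 4) (hc : d.Complete) (μ : Measure ℝ)
    (hnull : ∀ s : Set ℝ, volume s = 0 → μ s = 0) :
    μ (Set.Icc 0 1) ≤ ∑ i, μ (d.pieces i) := by
  have h0 := hnull _ (complement_null d hc)
  have hle : μ (Set.Icc (0:ℝ) 1)
      ≤ μ (⋃ i, d.pieces i) + μ (Set.Icc (0:ℝ) 1 \ ⋃ i, d.pieces i) := by
    refine le_trans (measure_mono ?_) (measure_union_le _ _)
    intro x hx
    by_cases h : x ∈ ⋃ i, d.pieces i
    · exact Or.inl h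
    · exact Or.inr ⟨hx, h⟩
  rw [h0, add_zero, measure_iUnion d.disj (fun i => connDiv_measurable d i),
    tsum_fintype] at hle
  exact hle

lemma bound4 (d : ConnDiv 4) (hc : d.Complete) (j : Fin 4) {μ : Measure ℝ}
    (hnull : ∀ s : Set ℝ, volume s = 0 → μ s = 0)
    (htot : ENNReal.ofReal 1 ≤ μ (Set.Icc 0 1))
    (hmax : ∀ k, μ (d.pieces k) ≤ μ (d.pieces j)) :
    ENNReal.ofReal 1 ≤ 4 * μ (d.pieces j) := by
  calc ENNReal.ofReal 1 ≤ μ (Set.Icc 0 1) := htot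
    _ ≤ ∑ i, μ (d.pieces i) := sum_pieces_ge d hc μ hnull
    _ ≤ μ (d.pieces j) + μ (d.pieces j) + μ (d.pieces j) + μ (d.pieces j) := by
        rw [Fin.sum_univ_four]
        exact add_le_add (add_le_add (add_le_add (hmax 0) (hmax 1)) (hmax 2)) (hmax 3)
    _ = 4 * μ (d.pieces j) := by ring

/-- In the 4-player egalitarian construction, in every envy-free complete
connected division the rightmost piece must be given to player 1. -/
theorem rightmost_piece_to_player1 (ε : ℝ) (hε : 0 < ε) (hε' : ε < 1/100)
    (d : ConnDiv 4) (hc : d.Complete) (hEF : EnvyFree (vEg4' ε) d) :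
    ∃ a : ℝ, a < 1 ∧ d.pieces 0 = Set.Ioo a 1 := by
  have h1mem : (1:ℝ) ∈ Set.Icc (0:ℝ) 1 := by norm_num
  obtain ⟨j, hj1⟩ := Set.mem_iUnion.1 (hc h1mem)
  obtain ⟨c, b, hjcb⟩ := d.isInterval j
  have hcb : c < b := by
    by_contra h
    rw [hjcb, Set.Ioo_eq_empty h, closure_empty] at hj1
    exact hj1
  rw [hjcb, closure_Ioo hcb.ne] at hj1
  have hb1 : b ≤ 1 := by
    by_contra h
    push_neg at h
    have hmx : max c 1 < b := max_lt hcb h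
    have hx : (max c 1 + b)/2 ∈ d.pieces j := by
      rw [hjcb]
      exact ⟨by linarith [le_max_left c 1], by linarith⟩
    have h2 := (d.subset j hx).2
    have h3 := le_max_right c 1
    linarith
  have hb : b = 1 := le_antisymm hb1 hj1.2
  subst hb
  have hc0 : 0 ≤ c := by
    by_contra h
    push_neg at h
    have hmn : c < min 1 0 := lt_min hcb h
    have hx : (c + min 1 0)/2 ∈ d.pieces j := by
      rw [hjcb]
      exact ⟨by linarith, by linarith [min_le_left (1:ℝ) 0]⟩
    have h2 := (d.subset j hx).1
    have h3 := min_le_right (1:ℝ) 0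
    linarith
  by_cases hj0 : j = 0
  · exact ⟨c, hcb, by rw [← hj0]; exact hjcb⟩
  exfalso
  have hv1 : vEg4' ε 1 = q2 ε := rfl
  have hv2 : vEg4' ε 2 = qU := rfl
  have hv3 : vEg4' ε 3 = qU := rfl
  have hc34 : c ≤ 3/4 := by
    fin_cases j
    · exact absurd rfl hj0
    · by_contra h34
      push_neg at h34
      have hb4 : ENNReal.ofReal 1 ≤ 4 * q2 ε (d.pieces 1) :=
        bound4 d hc 1 (fun s hs => q2_null hs) (q2_total hε hε')
          (fun k => by have := hEF 1 k; rwa [hv1] at this)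
      rw [show d.pieces 1 = Set.Ioo c 1 from hjcb, q2_right_zero hε hε' h34.le] at hb4
      simp at hb4
    · have hb4 : ENNReal.ofReal 1 ≤ 4 * qU (d.pieces 2) :=
        bound4 d hc 2 (fun s hs => qU_null hs) qU_Icc.ge
          (fun k => by have := hEF 2 k; rwa [hv2] at this)
      rw [show d.pieces 2 = Set.Ioo c 1 from hjcb, qU_Ioo hc0,
        show (4:ℝ≥0∞) * ENNReal.ofReal (1-c) = ENNReal.ofReal (4*(1-c)) by
          rw [ENNReal.ofReal_mul (by norm_num)]; norm_num] at hb4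
      have := (ENNReal.ofReal_le_ofReal_iff (by linarith)).1 hb4
      linarith
    · have hb4 : ENNReal.ofReal 1 ≤ 4 * qU (d.pieces 3) :=
        bound4 d hc 3 (fun s hs => qU_null hs) qU_Icc.ge
          (fun k => by have := hEF 3 k; rwa [hv3] at this)
      rw [show d.pieces 3 = Set.Ioo c 1 from hjcb, qU_Ioo hc0,
        show (4:ℝ≥0∞) * ENNReal.ofReal (1-c) = ENNReal.ofReal (4*(1-c)) by
          rw [ENNReal.ofReal_mul (by norm_num)]; norm_num] at hb4
      have := (ENNReal.ofReal_le_ofReal_iff (by linarith)).1 hb4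
      linarith
  have hEF0 : q1 ε (d.pieces j) ≤ q1 ε (d.pieces 0) := hEF 0 j
  have hlow : ENNReal.ofReal (1/2+ε) ≤ q1 ε (d.pieces j) := by
    rw [hjcb]; exact q1_right hε hε' hc34
  have hdisj := d.disj (show (0:Fin 4) ≠ j from fun h => hj0 h.symm)
  have hun : q1 ε (d.pieces 0) + q1 ε (d.pieces j) ≤ 1 := by
    rw [← measure_union hdisj (connDiv_measurable d j)]
    exact le_trans (measure_mono (Set.subset_univ _)) (q1_univ_le hε hε')
  have hfin : ENNReal.ofReal (1/2+ε) + ENNReal.ofReal (1/2+ε) ≤ 1 :=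
    le_trans (add_le_add (le_trans hlow hEF0) hlow) hun
  rw [← ENNReal.ofReal_add (by linarith) (by linarith), ← ENNReal.ofReal_one] at hfin
  have hcon := (ENNReal.ofReal_le_ofReal_iff (by norm_num)).1 hfin
  linarith
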